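/- VCG with Clarke-pivot payments is not envy-free under heterogeneous capacities: consider two agents and two goods a, b, where agent 1 has capacity 1 with per-item values w_1 a = 2, w_1 b = 2, and agent 2 has capacity 2 with per-item values w_2 a = 1, w_2 b = 2 (capacitated valuations induced by these values and capacities). The unique welfare-maximizing allocation gives {a} to agent 1 and {b} to agent 2; the Clarke-pivot payments are p_1 = 1 and p_2 = 0; and agent 1 envies agent 2: v_1({b}) − p_2 > v_1({a}) − p_1. -/

import Mathlib

/-- The capacitated valuation induced by per-item values `w` and capacity `c`:
the maximum, over subsets `T ⊆ S` with `|T| ≤ c`, of `∑ j ∈ T, w j`. -/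
noncomputable def capVal {G : Type*} [DecidableEq G] (w : G → ℝ) (c : ℕ)
    (S : Finset G) : ℝ :=
  (S.powerset.filter fun T => T.card ≤ c).sup' ⟨∅, by simp⟩ (fun T => ∑ j ∈ T, w j)

section helpers

variable (w : Fin 2 → ℝ)

lemma capVal_empty (c : ℕ) : capVal w c ∅ = 0 := by
  have h : (Finset.filter (fun T => T.card ≤ c) (∅ : Finset (Fin 2)).powerset)
      = {∅} := by
    ext T
    simp only [Finset.powerset_empty, Finset.filter_singleton, Finset.card_empty,
      Nat.zero_le, if_true]
  rw [capVal]
  erw [Finset.sup'_congr _ h (fun _ _ => rfl)]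
  simp

lemma capVal_s0 (c : ℕ) (hc : 1 ≤ c) : capVal w c {0} = max 0 (w 0) := by
  have h : (Finset.filter (fun T => T.card ≤ c) ({0} : Finset (Fin 2)).powerset)
      = {∅, {0}} := by
    ext T
    simp only [Finset.mem_filter, Finset.mem_powerset, Finset.mem_insert,
      Finset.mem_singleton]
    constructor
    · rintro ⟨hT, -⟩
      rcases Finset.subset_singleton_iff.mp hT with h | h <;> simp [h]
    · rintro (rfl | rfl) <;> simp [hc]
  rw [capVal]
  erw [Finset.sup'_congr _ h (fun _ _ => rfl)]
  simp [Finset.sup'_insert]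

lemma capVal_s1 (c : ℕ) (hc : 1 ≤ c) : capVal w c {1} = max 0 (w 1) := by
  have h : (Finset.filter (fun T => T.card ≤ c) ({1} : Finset (Fin 2)).powerset)
      = {∅, {1}} := by
    ext T
    simp only [Finset.mem_filter, Finset.mem_powerset, Finset.mem_insert,
      Finset.mem_singleton]
    constructor
    · rintro ⟨hT, -⟩
      rcases Finset.subset_singleton_iff.mp hT with h | h <;> simp [h]
    · rintro (rfl | rfl) <;> simp [hc]
  rw [capVal]
  erw [Finset.sup'_congr _ h (fun _ _ => rfl)]
  simp [Finset.sup'_insert]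

lemma capVal_univ1 : capVal w 1 Finset.univ = max 0 (max (w 0) (w 1)) := by
  have h : (Finset.filter (fun T => T.card ≤ 1) (Finset.univ : Finset (Fin 2)).powerset)
      = {∅, {0}, {1}} := by decide
  rw [capVal]
  erw [Finset.sup'_congr _ h (fun _ _ => rfl)]
  simp [Finset.sup'_insert]

lemma capVal_univ2 :
    capVal w 2 Finset.univ = max 0 (max (w 0) (max (w 1) (w 0 + w 1))) := by
  have h : (Finset.filter (fun T => T.card ≤ 2) (Finset.univ : Finset (Fin 2)).powerset)
      = {∅, {0}, {1}, {0, 1}} := by decide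
  rw [capVal]
  erw [Finset.sup'_congr _ h (fun _ _ => rfl)]
  have : ({0, 1} : Finset (Fin 2)) = insert 0 {1} := rfl
  simp [Finset.sup'_insert, Finset.sum_insert, this, max_assoc]

lemma finset_fin2_cases : ∀ S : Finset (Fin 2),
    S = ∅ ∨ S = {0} ∨ S = {1} ∨ S = Finset.univ := by decide

end helpers

/-- VCG with Clarke-pivot payments is not envy-free under heterogeneous
capacities: with goods `a = 0`, `b = 1`, agent 1 having capacity 1 and values
`(2, 2)`, agent 2 having capacity 2 and values `(1, 2)`, the unique
welfare-maximizing allocation gives `{a}` to agent 1 and `{b}` to agent 2,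
the Clarke-pivot payments are `p₁ = 1` and `p₂ = 0`, and agent 1 envies
agent 2. -/
theorem clarke_pivot_not_EF_example (w₁ w₂ : Fin 2 → ℝ)
    (hw₁ : w₁ = fun _ => 2)
    (hw₂a : w₂ 0 = 1) (hw₂b : w₂ 1 = 2)
    (p₁ p₂ : ℝ)
    -- Clarke-pivot payments: the best the other agent could get alone, minus
    -- the other agent's welfare at the chosen allocation
    (hp₁ : p₁ = capVal w₂ 2 Finset.univ - capVal w₂ 2 {1})
    (hp₂ : p₂ = capVal w₁ 1 Finset.univ - capVal w₁ 1 {0}) :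
    -- the allocation ({a}, {b}) is welfare-maximizing
    (∀ S₁ S₂ : Finset (Fin 2), Disjoint S₁ S₂ →
      capVal w₁ 1 S₁ + capVal w₂ 2 S₂ ≤ capVal w₁ 1 {0} + capVal w₂ 2 {1}) ∧
    -- and it is the unique welfare-maximizing allocation
    (∀ S₁ S₂ : Finset (Fin 2), Disjoint S₁ S₂ →
      capVal w₁ 1 S₁ + capVal w₂ 2 S₂ = capVal w₁ 1 {0} + capVal w₂ 2 {1} →
      S₁ = {0} ∧ S₂ = {1}) ∧
    p₁ = 1 ∧ p₂ = 0 ∧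
    -- agent 1 envies agent 2
    capVal w₁ 1 {0} - p₁ < capVal w₁ 1 {1} - p₂ := by
  have e1 : capVal w₁ 1 ∅ = 0 := capVal_empty _ _
  have e2 : capVal w₁ 1 {0} = 2 := by rw [capVal_s0 w₁ 1 le_rfl, hw₁]; norm_num
  have e3 : capVal w₁ 1 {1} = 2 := by rw [capVal_s1 w₁ 1 le_rfl, hw₁]; norm_num
  have e4 : capVal w₁ 1 Finset.univ = 2 := by rw [capVal_univ1, hw₁]; norm_num
  have f1 : capVal w₂ 2 ∅ = 0 := capVal_empty _ _
  have f2 : capVal w₂ 2 {0} = 1 := by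
    rw [capVal_s0 w₂ 2 (by norm_num), hw₂a]; norm_num
  have f3 : capVal w₂ 2 {1} = 2 := by
    rw [capVal_s1 w₂ 2 (by norm_num), hw₂b]; norm_num
  have f4 : capVal w₂ 2 Finset.univ = 3 := by
    rw [capVal_univ2, hw₂a, hw₂b]; norm_num
  refine ⟨?_, ?_, ?_, ?_, ?_⟩
  · intro S₁ S₂ hd
    rcases finset_fin2_cases S₁ with rfl | rfl | rfl | rfl <;>
      rcases finset_fin2_cases S₂ with rfl | rfl | rfl | rfl <;>
      first
        | exact absurd hd (by decide)
        | simp only [e1, e2, e3, e4, f1, f2, f3, f4] <;> norm_num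
  · intro S₁ S₂ hd heq
    rcases finset_fin2_cases S₁ with rfl | rfl | rfl | rfl <;>
      rcases finset_fin2_cases S₂ with rfl | rfl | rfl | rfl <;>
      first
        | exact absurd hd (by decide)
        | exact ⟨rfl, rfl⟩
        | norm_num [e1, e2, e3, e4, f1, f2, f3, f4] at heq
  · rw [hp₁, f4, f3]; norm_num
  · rw [hp₂, e4, e2]; norm_num
  · rw [hp₁, hp₂, e2, e3, e4, f3, f4]; norm_num
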